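/- Let β₁, β₂, β₃, β₄ ≥ 0 with β₃ = β₄, let θ ∈ [0, 2π), let Q = Q(θ) be the rotation of ℝ² with matrix ((cos θ, −sin θ), (sin θ, cos θ)), and let w : ℝ² → ℝ² be continuously differentiable. Then, with w̌(x) = Qᵀ w(Q x), one has ∫_{ℝ²} √(β₁·curl(w̌)(x)² + β₂·div(w̌)(x)² + β₃·sh₁(w̌)(x)² + β₄·sh₂(w̌)(x)²) dx = ∫_{ℝ²} √(β₁·curl(w)(x)² + β₂·div(w)(x)² + β₃·sh₁(w)(x)² + β₄·sh₂(w)(x)²) dx, where the integrals are Lebesgue integrals with values in [0,∞] with respect to the Lebesgue measure on ℝ². -/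

import Mathlib

/-- Rotation of `ℝ²` by angle `θ`, with matrix `((cos θ, −sin θ), (sin θ, cos θ))`. -/
noncomputable def rotQ (θ : ℝ) (p : ℝ × ℝ) : ℝ × ℝ :=
  (Real.cos θ * p.1 - Real.sin θ * p.2, Real.sin θ * p.1 + Real.cos θ * p.2)

/-- Transpose (inverse) of the rotation `rotQ θ`. -/
noncomputable def rotQT (θ : ℝ) (p : ℝ × ℝ) : ℝ × ℝ :=
  (Real.cos θ * p.1 + Real.sin θ * p.2, -Real.sin θ * p.1 + Real.cos θ * p.2)

/-- `curl(w)(x) = ∂w₂/∂x₁ − ∂w₁/∂x₂` via the Fréchet derivative. -/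
noncomputable def curlOp (w : ℝ × ℝ → ℝ × ℝ) (x : ℝ × ℝ) : ℝ :=
  (fderiv ℝ w x (1, 0)).2 - (fderiv ℝ w x (0, 1)).1

/-- `div(w)(x) = ∂w₁/∂x₁ + ∂w₂/∂x₂` via the Fréchet derivative. -/
noncomputable def divOp (w : ℝ × ℝ → ℝ × ℝ) (x : ℝ × ℝ) : ℝ :=
  (fderiv ℝ w x (1, 0)).1 + (fderiv ℝ w x (0, 1)).2

/-- `sh₁(w)(x) = ∂w₂/∂x₂ − ∂w₁/∂x₁` via the Fréchet derivative. -/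
noncomputable def sh1Op (w : ℝ × ℝ → ℝ × ℝ) (x : ℝ × ℝ) : ℝ :=
  (fderiv ℝ w x (0, 1)).2 - (fderiv ℝ w x (1, 0)).1

/-- `sh₂(w)(x) = ∂w₁/∂x₂ + ∂w₂/∂x₁` via the Fréchet derivative. -/
noncomputable def sh2Op (w : ℝ × ℝ → ℝ × ℝ) (x : ℝ × ℝ) : ℝ :=
  (fderiv ℝ w x (0, 1)).1 + (fderiv ℝ w x (1, 0)).2

open MeasureTheory

noncomputable def rotCLM (θ : ℝ) : (ℝ × ℝ) →L[ℝ] (ℝ × ℝ) :=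
  (Real.cos θ • ContinuousLinearMap.fst ℝ ℝ ℝ - Real.sin θ • ContinuousLinearMap.snd ℝ ℝ ℝ).prod
    (Real.sin θ • ContinuousLinearMap.fst ℝ ℝ ℝ + Real.cos θ • ContinuousLinearMap.snd ℝ ℝ ℝ)

noncomputable def rotCLMT (θ : ℝ) : (ℝ × ℝ) →L[ℝ] (ℝ × ℝ) :=
  (Real.cos θ • ContinuousLinearMap.fst ℝ ℝ ℝ + Real.sin θ • ContinuousLinearMap.snd ℝ ℝ ℝ).prod
    ((-Real.sin θ) • ContinuousLinearMap.fst ℝ ℝ ℝ + Real.cos θ • ContinuousLinearMap.snd ℝ ℝ ℝ)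

lemma rotCLM_apply (θ : ℝ) (p : ℝ × ℝ) : rotCLM θ p = rotQ θ p := by
  simp [rotCLM, rotQ]

lemma rotCLMT_apply (θ : ℝ) (p : ℝ × ℝ) : rotCLMT θ p = rotQT θ p := by
  simp [rotCLMT, rotQT]

lemma rotCLM_det (θ : ℝ) : LinearMap.det ((rotCLM θ) : (ℝ × ℝ) →ₗ[ℝ] (ℝ × ℝ)) = 1 := by
  rw [← LinearMap.det_toMatrix (Module.Basis.finTwoProd ℝ), Matrix.det_fin_two]
  simp [LinearMap.toMatrix_apply, Module.Basis.coe_finTwoProd_repr, rotCLM]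
  nlinarith [Real.sin_sq_add_cos_sq θ]

lemma rotQ_measurePreserving (θ : ℝ) :
    MeasurePreserving (rotQ θ) (volume : Measure (ℝ × ℝ)) volume := by
  have hfun : rotQ θ = ⇑((rotCLM θ) : (ℝ × ℝ) →ₗ[ℝ] (ℝ × ℝ)) := by
    funext p; exact (rotCLM_apply θ p).symm
  constructor
  · rw [hfun]; exact (rotCLM θ).continuous.measurable
  · rw [hfun, Measure.map_linearMap_addHaar_eq_smul_addHaar volume (by rw [rotCLM_det]; norm_num),
      rotCLM_det]
    simp

lemma fderiv_rot (θ : ℝ) (w : ℝ × ℝ → ℝ × ℝ) (hw : ContDiff ℝ 1 w) (x : ℝ × ℝ) :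
    fderiv ℝ (fun y => rotQT θ (w (rotQ θ y))) x =
      (rotCLMT θ).comp ((fderiv ℝ w (rotQ θ x)).comp (rotCLM θ)) := by
  have hfun : (fun y => rotQT θ (w (rotQ θ y))) = ⇑(rotCLMT θ) ∘ w ∘ ⇑(rotCLM θ) := by
    funext p; simp [Function.comp, rotCLM_apply, rotCLMT_apply]
  rw [hfun]
  have h1 : HasFDerivAt (⇑(rotCLM θ)) (rotCLM θ) x := (rotCLM θ).hasFDerivAt
  have h2 : HasFDerivAt w (fderiv ℝ w (rotQ θ x)) (rotCLM θ x) := by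
    rw [rotCLM_apply]; exact (hw.differentiable one_ne_zero (rotQ θ x)).hasFDerivAt
  have h3 : HasFDerivAt (⇑(rotCLMT θ)) (rotCLMT θ) (w (rotCLM θ x)) := (rotCLMT θ).hasFDerivAt
  exact ((h3.comp x (h2.comp x h1)).congr_fderiv rfl).fderiv

lemma pointwise_eq (β₁ β₂ β₃ β₄ : ℝ) (hβ : β₃ = β₄) (θ : ℝ) (w : ℝ × ℝ → ℝ × ℝ)
    (hw : ContDiff ℝ 1 w) (x : ℝ × ℝ) :
    β₁ * curlOp (fun y => rotQT θ (w (rotQ θ y))) x ^ 2 +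
      β₂ * divOp (fun y => rotQT θ (w (rotQ θ y))) x ^ 2 +
      β₃ * sh1Op (fun y => rotQT θ (w (rotQ θ y))) x ^ 2 +
      β₄ * sh2Op (fun y => rotQT θ (w (rotQ θ y))) x ^ 2 =
    β₁ * curlOp w (rotQ θ x) ^ 2 + β₂ * divOp w (rotQ θ x) ^ 2 +
      β₃ * sh1Op w (rotQ θ x) ^ 2 + β₄ * sh2Op w (rotQ θ x) ^ 2 := by
  set c := Real.cos θ with hc
  set s := Real.sin θ with hs
  set D := fderiv ℝ w (rotQ θ x) with hD
  set a := D (1, 0) with ha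
  set b := D (0, 1) with hb
  have hP : s ^ 2 + c ^ 2 = 1 := Real.sin_sq_add_cos_sq θ
  have e1 : (rotCLM θ) ((1 : ℝ), (0 : ℝ)) = c • ((1 : ℝ), (0 : ℝ)) + s • ((0 : ℝ), (1 : ℝ)) := by
    simp [rotCLM, Prod.ext_iff, hc, hs]
  have e2 : (rotCLM θ) ((0 : ℝ), (1 : ℝ)) = (-s) • ((1 : ℝ), (0 : ℝ)) + c • ((0 : ℝ), (1 : ℝ)) := by
    simp [rotCLM, Prod.ext_iff, hc, hs]
  have f1 : fderiv ℝ (fun y => rotQT θ (w (rotQ θ y))) x (1, 0) =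
      rotCLMT θ (c • a + s • b) := by
    rw [fderiv_rot θ w hw x]
    simp only [ContinuousLinearMap.comp_apply, e1, map_add, ContinuousLinearMap.map_smul, ← hD, ← ha, ← hb]
  have f2 : fderiv ℝ (fun y => rotQT θ (w (rotQ θ y))) x (0, 1) =
      rotCLMT θ ((-s) • a + c • b) := by
    rw [fderiv_rot θ w hw x]
    simp only [ContinuousLinearMap.comp_apply, e2, map_add, ContinuousLinearMap.map_smul, ← hD, ← ha, ← hb]
  have g1 : ∀ v : ℝ × ℝ, rotCLMT θ v = (c * v.1 + s * v.2, -s * v.1 + c * v.2) := by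
    intro v; simp [rotCLMT, hc, hs]
  simp only [curlOp, divOp, sh1Op, sh2Op, f1, f2, g1, ← hD, ← ha, ← hb,
    Prod.smul_fst, Prod.smul_snd, Prod.fst_add, Prod.snd_add, smul_eq_mul]
  subst hβ
  linear_combination ((s^2+c^2+1) * (β₁*(a.2-b.1)^2 + β₂*(a.1+b.2)^2 +
    β₃*((b.2-a.1)^2+(b.1+a.2)^2))) * hP

/-- For `β₁,…,β₄ ≥ 0` with `β₃ = β₄`, a rotation `Q = Q(θ)` and a `C¹`
vector field `w : ℝ² → ℝ²`, with `w̌(x) = Qᵀ w(Q x)`, the Lebesgue integral over `ℝ²` of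
`√(β₁ curl(w̌)² + β₂ div(w̌)² + β₃ sh₁(w̌)² + β₄ sh₂(w̌)²)` equals that of the
corresponding expression for `w`. -/
theorem stmt12 (β₁ β₂ β₃ β₄ : ℝ) (hβ₁ : 0 ≤ β₁) (hβ₂ : 0 ≤ β₂) (hβ₃ : 0 ≤ β₃)
    (hβ₄ : 0 ≤ β₄) (hβ : β₃ = β₄)
    (θ : ℝ) (hθ : θ ∈ Set.Ico 0 (2 * Real.pi)) (w : ℝ × ℝ → ℝ × ℝ)
    (hw : ContDiff ℝ 1 w) :
    ∫⁻ x : ℝ × ℝ, ENNReal.ofReal (Real.sqrt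
        (β₁ * curlOp (fun y => rotQT θ (w (rotQ θ y))) x ^ 2 +
          β₂ * divOp (fun y => rotQT θ (w (rotQ θ y))) x ^ 2 +
          β₃ * sh1Op (fun y => rotQT θ (w (rotQ θ y))) x ^ 2 +
          β₄ * sh2Op (fun y => rotQT θ (w (rotQ θ y))) x ^ 2)) =
      ∫⁻ x : ℝ × ℝ, ENNReal.ofReal (Real.sqrt
        (β₁ * curlOp w x ^ 2 + β₂ * divOp w x ^ 2 +
          β₃ * sh1Op w x ^ 2 + β₄ * sh2Op w x ^ 2)) := by
  have h1 : ∀ x, ENNReal.ofReal (Real.sqrt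
        (β₁ * curlOp (fun y => rotQT θ (w (rotQ θ y))) x ^ 2 +
          β₂ * divOp (fun y => rotQT θ (w (rotQ θ y))) x ^ 2 +
          β₃ * sh1Op (fun y => rotQT θ (w (rotQ θ y))) x ^ 2 +
          β₄ * sh2Op (fun y => rotQT θ (w (rotQ θ y))) x ^ 2)) =
      ENNReal.ofReal (Real.sqrt
        (β₁ * curlOp w (rotQ θ x) ^ 2 + β₂ * divOp w (rotQ θ x) ^ 2 +
          β₃ * sh1Op w (rotQ θ x) ^ 2 + β₄ * sh2Op w (rotQ θ x) ^ 2)) := by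
    intro x
    rw [pointwise_eq β₁ β₂ β₃ β₄ hβ θ w hw x]
  simp only [h1]
  have hfd : Continuous (fderiv ℝ w) := hw.continuous_fderiv one_ne_zero
  have hv : ∀ v : ℝ × ℝ, Continuous fun x => fderiv ℝ w x v := fun v =>
    (ContinuousLinearMap.apply ℝ (ℝ × ℝ) v).continuous.comp hfd
  have hg : Measurable fun x => ENNReal.ofReal (Real.sqrt
      (β₁ * curlOp w x ^ 2 + β₂ * divOp w x ^ 2 +
        β₃ * sh1Op w x ^ 2 + β₄ * sh2Op w x ^ 2)) := by
    apply Continuous.measurable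
    apply ENNReal.continuous_ofReal.comp
    apply Real.continuous_sqrt.comp
    unfold curlOp divOp sh1Op sh2Op
    have h10 := hv (1, 0)
    have h01 := hv (0, 1)
    fun_prop
  exact (rotQ_measurePreserving θ).lintegral_comp hg
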